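/- Let V = [B₁, B₂, B₃] = (1/√2)·[[1,1,0,0, 1,1,0,0, 1,1,0,0],[1,-1,0,0, 0,0,1,1, 0,0,1,1],[0,0,1,1, 1,-1,0,0, 0,0,1,-1],[0,0,1,-1, 0,0,1,-1, 1,-1,0,0]] ∈ ℝ^{4×12}, whose columns v₁,…,v₁₂ comprise three mutually unbiased orthonormal bases of ℝ⁴. Then (v_j) is a 12-point spherical (2,2)-design for ℝ⁴: Σ_{j=1}^{12} Σ_{k=1}^{12} |⟨v_j,v_k⟩|⁴ = 18, the left side evaluating as 12·1 + 96·(1/2)⁴ + 36·0⁴ = 18. -/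
import Mathlib


open Real Matrix

/-- The `4×12` matrix `B = [B₁,B₂,B₃]` whose columns are three mutually unbiased
orthonormal bases of `ℝ⁴`. -/
noncomputable def B : Matrix (Fin 4) (Fin 12) ℝ :=
  (1 / Real.sqrt 2) •
    !![1, 1, 0, 0, 1, 1, 0, 0, 1, 1, 0, 0;
       1, -1, 0, 0, 0, 0, 1, 1, 0, 0, 1, 1;
       0, 0, 1, 1, 1, -1, 0, 0, 0, 0, 1, -1;
       0, 0, 1, -1, 0, 0, 1, -1, 1, -1, 0, 0]

/-- The integer version of `B` (without the `1/√2` normalization). -/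
def Bint : Matrix (Fin 4) (Fin 12) ℝ :=
    !![1, 1, 0, 0, 1, 1, 0, 0, 1, 1, 0, 0;
       1, -1, 0, 0, 0, 0, 1, 1, 0, 0, 1, 1;
       0, 0, 1, 1, 1, -1, 0, 0, 0, 0, 1, -1;
       0, 0, 1, -1, 0, 0, 1, -1, 1, -1, 0, 0]

lemma B_mul_B (i : Fin 4) (j k : Fin 12) :
    B i j * B i k = (1/2) * (Bint i j * Bint i k) := by
  simp only [B, Bint, Matrix.smul_apply, smul_eq_mul]
  ring_nf
  rw [show (Real.sqrt 2)⁻¹ ^ 2 = 1/2 by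
    rw [inv_pow, Real.sq_sqrt (by norm_num)]; norm_num]
  ring

set_option maxHeartbeats 1000000 in
/-- The twelve columns `v₁,…,v₁₂` of `B` (three mutually unbiased orthonormal bases of `ℝ⁴`)
form a `12`-point spherical `(2,2)`-design for `ℝ⁴`:
`Σ_j Σ_k |⟨v_j, v_k⟩|⁴ = 18 = (1/8)·12²`. -/
theorem three_MUBs_two_two_design :
    ∑ j : Fin 12, ∑ k : Fin 12, |∑ i : Fin 4, B i j * B i k| ^ 4 = 18 := by
  simp only [B_mul_B, (by decide : Even 4).pow_abs]
  norm_num [Fin.sum_univ_succ, Bint]
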